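/- Let Σ and Q be nonempty finite sets with distinguished blank symbol □ ∈ Σ, and let δ = (δ₁,δ₂,δ₃) : Σ × Q → Σ × Q × {L,S,R} be a transition function. Suppose Y : ℤ → ℝ^Σ assigns to each u ∈ ℤ a probability vector Y(u) ∈ ΔΣ with Y(u) equal to the Dirac vector at □ for all but finitely many u, and S ∈ ΔQ is a probability vector. Define M(d) = Σ_{σ,q} [δ₃(σ,q)=d]·Y(0)_σ·S_q for d ∈ {L,S,R}, W(σ) = Σ_{σ',q} [δ₁(σ',q)=σ]·Y(0)_{σ'}·S_q, S'_q = Σ_{σ,q'} [δ₂(σ,q')=q]·Y(0)_σ·S_{q'}, and Y'(u)_σ = M(L)·([u≠1]·Y(u−1)_σ + [u=1]·W(σ)) + M(S)·([u≠0]·Y(u)_σ + [u=0]·W(σ)) + M(R)·([u≠−1]·Y(u+1)_σ + [u=−1]·W(σ)). Then M ∈ Δ{L,S,R}, W ∈ ΔΣ, S' ∈ ΔQ, each Y'(u) ∈ ΔΣ, and Y'(u) equals the Dirac vector at □ for all but finitely many u. Hence the smooth relaxation Δstep maps (ΔΣ)^{ℤ,□} × ΔQ to itself. -/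

import Mathlib

/-- The three possible motions of the Turing machine head: left, stay, right. -/
inductive Dir : Type
  | L | S | R
  deriving DecidableEq

instance : Fintype Dir :=
  ⟨{Dir.L, Dir.S, Dir.R}, fun d => by cases d <;> simp⟩

/-- The Dirac (one-hot) probability vector at `x₀ ∈ X`. -/
def dirac {X : Type*} [DecidableEq X] (x₀ : X) : X → ℝ :=
  fun x => if x = x₀ then 1 else 0

/-- `p` is a probability vector on the finite set `X`. -/
def IsProbVec {X : Type*} [Fintype X] (p : X → ℝ) : Prop :=
  (∀ x, 0 ≤ p x) ∧ ∑ x, p x = 1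

lemma push_nonneg {A Q X : Type*} [Fintype A] [Fintype Q] [DecidableEq X]
    (f : A × Q → X) (p : A → ℝ) (q : Q → ℝ) (hp : ∀ a, 0 ≤ p a) (hq : ∀ a, 0 ≤ q a) (x : X) :
    0 ≤ ∑ σ : A, ∑ r : Q, (if f (σ, r) = x then (1:ℝ) else 0) * p σ * q r := by
  apply Finset.sum_nonneg; intro σ _
  apply Finset.sum_nonneg; intro r _
  have : (0:ℝ) ≤ if f (σ, r) = x then (1:ℝ) else 0 := by split_ifs <;> norm_num
  exact mul_nonneg (mul_nonneg this (hp σ)) (hq r)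

lemma push_sum {A Q X : Type*} [Fintype A] [Fintype Q] [Fintype X] [DecidableEq X]
    (f : A × Q → X) (p : A → ℝ) (q : Q → ℝ) (hp : ∑ a, p a = 1) (hq : ∑ a, q a = 1) :
    ∑ x : X, ∑ σ : A, ∑ r : Q, (if f (σ, r) = x then (1:ℝ) else 0) * p σ * q r = 1 := by
  rw [Finset.sum_comm]
  have : ∀ σ : A, ∑ x : X, ∑ r : Q, (if f (σ, r) = x then (1:ℝ) else 0) * p σ * q r
      = p σ := by
    intro σ
    rw [Finset.sum_comm]
    have : ∀ r : Q, ∑ x : X, (if f (σ, r) = x then (1:ℝ) else 0) * p σ * q r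
        = p σ * q r := by
      intro r
      rw [← Finset.sum_mul, ← Finset.sum_mul]
      simp
    rw [Finset.sum_congr rfl fun r _ => this r, ← Finset.mul_sum, hq, mul_one]
  rw [Finset.sum_congr rfl fun σ _ => this σ, hp]

set_option maxHeartbeats 1000000 in
/-- The smooth relaxation `Δstep` of a Turing machine `(Σ, Q, δ)` maps
`(ΔΣ)^{ℤ,□} × ΔQ` to itself: given a probability-vector tape `Y` (Dirac at the
blank symbol at all but finitely many positions) and a probability vector `S` on
states, the quantities `M`, `W`, `S'` and the new tape `Y'` defined by the
naive-Bayesian propagation formulas are probability vectors, and `Y'` is again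
Dirac at the blank symbol at all but finitely many positions. -/
theorem stmt12 {A Q : Type*} [Fintype A] [Fintype Q] [Nonempty A] [Nonempty Q]
    [DecidableEq A] [DecidableEq Q]
    (blank : A) (δ : A × Q → A × Q × Dir)
    (Y : ℤ → A → ℝ) (hY : ∀ u, IsProbVec (Y u))
    (hYfin : {u : ℤ | Y u ≠ dirac blank}.Finite)
    (Sv : Q → ℝ) (hS : IsProbVec Sv)
    (M : Dir → ℝ)
    (hM : ∀ d, M d = ∑ σ : A, ∑ q : Q,
      (if (δ (σ, q)).2.2 = d then (1 : ℝ) else 0) * Y 0 σ * Sv q)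
    (W : A → ℝ)
    (hW : ∀ σ, W σ = ∑ σ' : A, ∑ q : Q,
      (if (δ (σ', q)).1 = σ then (1 : ℝ) else 0) * Y 0 σ' * Sv q)
    (S' : Q → ℝ)
    (hS' : ∀ q, S' q = ∑ σ : A, ∑ q' : Q,
      (if (δ (σ, q')).2.1 = q then (1 : ℝ) else 0) * Y 0 σ * Sv q')
    (Y' : ℤ → A → ℝ)
    (hY' : ∀ u σ, Y' u σ =
      M Dir.L * ((if u ≠ 1 then (1 : ℝ) else 0) * Y (u - 1) σ
                  + (if u = 1 then (1 : ℝ) else 0) * W σ)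
      + M Dir.S * ((if u ≠ 0 then (1 : ℝ) else 0) * Y u σ
                  + (if u = 0 then (1 : ℝ) else 0) * W σ)
      + M Dir.R * ((if u ≠ -1 then (1 : ℝ) else 0) * Y (u + 1) σ
                  + (if u = -1 then (1 : ℝ) else 0) * W σ)) :
    IsProbVec M ∧ IsProbVec W ∧ IsProbVec S' ∧
    (∀ u, IsProbVec (Y' u)) ∧ {u : ℤ | Y' u ≠ dirac blank}.Finite := by
  obtain ⟨hY0, hY1⟩ := hY 0
  obtain ⟨hS0, hS1⟩ := hS
  have hMprob : IsProbVec M := by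
    constructor
    · intro d; rw [hM d]; exact push_nonneg (fun p : A × Q => (δ p).2.2) (Y 0) Sv hY0 hS0 d
    · rw [Finset.sum_congr rfl fun d _ => hM d]
      exact push_sum (fun p : A × Q => (δ p).2.2) (Y 0) Sv hY1 hS1
  have hWprob : IsProbVec W := by
    constructor
    · intro σ; rw [hW σ]; exact push_nonneg (fun p : A × Q => (δ p).1) (Y 0) Sv hY0 hS0 σ
    · rw [Finset.sum_congr rfl fun σ _ => hW σ]
      exact push_sum (fun p : A × Q => (δ p).1) (Y 0) Sv hY1 hS1
  have hS'prob : IsProbVec S' := by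
    constructor
    · intro q; rw [hS' q]; exact push_nonneg (fun p : A × Q => (δ p).2.1) (Y 0) Sv hY0 hS0 q
    · rw [Finset.sum_congr rfl fun q _ => hS' q]
      exact push_sum (fun p : A × Q => (δ p).2.1) (Y 0) Sv hY1 hS1
  have hMsum : M Dir.L + M Dir.S + M Dir.R = 1 := by
    have := hMprob.2
    rw [show (Finset.univ : Finset Dir) = {Dir.L, Dir.S, Dir.R} from rfl] at this
    simp at this
    linarith
  have hite : ∀ (P : Prop) [Decidable P], (0:ℝ) ≤ if P then 1 else 0 := by
    intro P _; split_ifs <;> norm_num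
  have hY'prob : ∀ u, IsProbVec (Y' u) := by
    intro u
    constructor
    · intro σ
      rw [hY' u σ]
      have h1 := mul_nonneg (hite (u ≠ 1)) ((hY (u-1)).1 σ)
      have h2 := mul_nonneg (hite (u = 1)) (hWprob.1 σ)
      have h3 := mul_nonneg (hite (u ≠ 0)) ((hY u).1 σ)
      have h4 := mul_nonneg (hite (u = 0)) (hWprob.1 σ)
      have h5 := mul_nonneg (hite (u ≠ -1)) ((hY (u+1)).1 σ)
      have h6 := mul_nonneg (hite (u = -1)) (hWprob.1 σ)
      exact add_nonneg (add_nonneg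
        (mul_nonneg (hMprob.1 Dir.L) (add_nonneg h1 h2))
        (mul_nonneg (hMprob.1 Dir.S) (add_nonneg h3 h4)))
        (mul_nonneg (hMprob.1 Dir.R) (add_nonneg h5 h6))
    · rw [Finset.sum_congr rfl fun σ _ => hY' u σ]
      rw [Finset.sum_add_distrib, Finset.sum_add_distrib]
      simp only [← Finset.mul_sum, Finset.sum_add_distrib]
      rw [(hY (u-1)).2, (hY u).2, (hY (u+1)).2, hWprob.2]
      have e1 : (if u ≠ 1 then (1:ℝ) else 0) * 1 + (if u = 1 then (1:ℝ) else 0) * 1 = 1 := by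
        split_ifs <;> simp_all
      have e2 : (if u ≠ 0 then (1:ℝ) else 0) * 1 + (if u = 0 then (1:ℝ) else 0) * 1 = 1 := by
        split_ifs <;> simp_all
      have e3 : (if u ≠ -1 then (1:ℝ) else 0) * 1 + (if u = -1 then (1:ℝ) else 0) * 1 = 1 := by
        split_ifs <;> simp_all
      rw [e1, e2, e3, mul_one, mul_one, mul_one, hMsum]
  refine ⟨hMprob, hWprob, hS'prob, hY'prob, ?_⟩
  set F := {u : ℤ | Y u ≠ dirac blank} with hF
  have : {u : ℤ | Y' u ≠ dirac blank} ⊆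
      ({-1, 0, 1} : Set ℤ) ∪ ((fun v => v + 1) '' F ∪ (F ∪ (fun v => v - 1) '' F)) := by
    intro u hu
    by_contra hcon
    simp only [Set.mem_union, Set.mem_insert_iff, Set.mem_singleton_iff, not_or] at hcon
    obtain ⟨⟨hm1, h0, h1⟩, hi1, hiF, hi2⟩ := hcon
    have hu1 : Y (u - 1) = dirac blank := by
      by_contra h
      exact hi1 ⟨u - 1, h, by ring⟩
    have hu2 : Y u = dirac blank := by
      by_contra h; exact hiF h
    have hu3 : Y (u + 1) = dirac blank := by
      by_contra h
      exact hi2 ⟨u + 1, h, by ring⟩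
    apply hu
    funext σ
    rw [hY' u σ, hu1, hu2, hu3, if_pos h1, if_pos h0, if_pos hm1,
      if_neg h1, if_neg h0, if_neg hm1]
    linear_combination (dirac blank σ) * hMsum
  apply Set.Finite.subset _ this
  exact (((Set.finite_singleton (1:ℤ)).insert 0).insert (-1)).union
    ((hYfin.image _).union (hYfin.union (hYfin.image _)))
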